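/- Suppose β ∈ ℝ^p is s-sparse, let B = β ⊗ β, let w_β = β/‖β‖₂ + s^{-1/2}·sign(β), and let T = { x ⊗ β + β ⊗ y : x, y ∈ ℝ^p }. If W^⊥ ∈ T^⊥ (orthogonal complement of T in the Frobenius inner product) has operator norm ‖W^⊥‖ ≤ 1, then W = w_β ⊗ w_β + W^⊥ is a subgradient of the mixed atomic norm at B: ⟨Wβ, β⟩ = θ_s(β,β) and ⟨Wu, v⟩ ≤ θ_s(u,v) for all u, v ∈ ℝ^p. -/

import Mathlib

open MeasureTheory ProbabilityTheory Finset

noncomputable section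

/-- Vectors in ℝ^p. -/
abbrev Vec (p : ℕ) := Fin p → ℝ

/-- p × p real matrices. -/
abbrev Mat (p : ℕ) := Matrix (Fin p) (Fin p) ℝ

/-- Euclidean (ℓ2) norm. -/
def l2 {p : ℕ} (u : Vec p) : ℝ := Real.sqrt (∑ i, (u i) ^ 2)

/-- ℓ1 norm. -/
def l1 {p : ℕ} (u : Vec p) : ℝ := ∑ i, |u i|

/-- Euclidean inner product. -/
def dotp {p : ℕ} (u v : Vec p) : ℝ := ∑ i, u i * v i

/-- θ_s(u,v) = (‖u‖₂ + s^{-1/2}‖u‖₁)(‖v‖₂ + s^{-1/2}‖v‖₁). -/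
def theta {p : ℕ} (s : ℝ) (u v : Vec p) : ℝ :=
  (l2 u + (Real.sqrt s)⁻¹ * l1 u) * (l2 v + (Real.sqrt s)⁻¹ * l1 v)

/-- Frobenius (Hilbert–Schmidt) inner product. -/
def frob {p : ℕ} (A B : Mat p) : ℝ := ∑ i, ∑ j, A i j * B i j

/-- Frobenius norm. -/
def frobNorm {p : ℕ} (A : Mat p) : ℝ := Real.sqrt (frob A A)

/-- The mixed atomic norm ‖B‖_{Γ_s}. -/
def mixedNorm {p : ℕ} (s : ℝ) (B : Mat p) : ℝ :=
  sInf { t | ∃ (K : ℕ) (u v : Fin K → Vec p),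
    B = ∑ k, Matrix.vecMulVec (u k) (v k) ∧ t = ∑ k, theta s (u k) (v k) }

/-- Dual norm of the mixed atomic norm. -/
def dualMixedNorm {p : ℕ} (s : ℝ) (Z : Mat p) : ℝ :=
  sSup { t | ∃ B : Mat p, mixedNorm s B ≤ 1 ∧ t = frob Z B }

/-- A vector is `s`-sparse if it has at most `s` nonzero entries. -/
def IsSparse {p : ℕ} (s : ℕ) (u : Vec p) : Prop := {i | u i ≠ 0}.ncard ≤ s

/-- Nuclear norm of a real matrix: the sum of its singular values. -/
def nuclearNorm {p : ℕ} (A : Mat p) : ℝ :=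
  ∑ i, Real.sqrt ((show (A.transpose * A).IsHermitian by
    simpa using Matrix.isHermitian_conjTranspose_mul_self A).eigenvalues i)

/-- Operator (spectral) norm of a real matrix. -/
def opNorm {p : ℕ} (A : Mat p) : ℝ :=
  sSup { t | ∃ u v : Vec p, l2 u ≤ 1 ∧ l2 v ≤ 1 ∧ t = dotp (A.mulVec u) v }

/-- `X` has sub-Gaussian (ψ₂) norm at most `K`: `E exp(X²/K²) ≤ 2`. -/
def HasSubgaussianNorm {Ω : Type*} [MeasurableSpace Ω] (μ : Measure Ω) (X : Ω → ℝ) (K : ℝ) :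
    Prop := ∫ ω, Real.exp ((X ω) ^ 2 / K ^ 2) ∂μ ≤ 2

/-- `W` is a subgradient of the mixed atomic norm `‖·‖_{Γ_s}` at `B`. -/
def InSubdiff {p : ℕ} (s : ℝ) (W B : Mat p) : Prop :=
  ∀ C : Mat p, mixedNorm s B + frob W (C - B) ≤ mixedNorm s C

lemma aux_l2_nonneg {p : ℕ} (u : Vec p) : 0 ≤ l2 u := Real.sqrt_nonneg _
lemma aux_l1_nonneg {p : ℕ} (u : Vec p) : 0 ≤ l1 u := Finset.sum_nonneg fun i _ => abs_nonneg _
lemma aux_sq_l2 {p : ℕ} (u : Vec p) : l2 u ^ 2 = ∑ i, (u i) ^ 2 :=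
  Real.sq_sqrt (by positivity)
lemma aux_dotp_self {p : ℕ} (u : Vec p) : dotp u u = l2 u ^ 2 := by
  rw [aux_sq_l2]; simp [dotp, sq]
lemma aux_l2_eq_zero {p : ℕ} {u : Vec p} (h : l2 u = 0) : u = 0 := by
  have h2 : ∑ i, (u i) ^ 2 = 0 := by rw [← aux_sq_l2, h]; ring
  funext i
  have := (Finset.sum_eq_zero_iff_of_nonneg (fun i _ => sq_nonneg (u i))).mp h2 i (mem_univ i)
  exact (pow_eq_zero_iff two_ne_zero).mp this
lemma aux_l2_pos {p : ℕ} {u : Vec p} (h : u ≠ 0) : 0 < l2 u :=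
  lt_of_le_of_ne (aux_l2_nonneg u) fun h' => h (aux_l2_eq_zero h'.symm)
lemma aux_abs_dotp_le {p : ℕ} (u v : Vec p) : |dotp u v| ≤ l2 u * l2 v := by
  have h : (dotp u v) ^ 2 ≤ (l2 u * l2 v) ^ 2 := by
    rw [mul_pow, aux_sq_l2, aux_sq_l2]
    exact Finset.sum_mul_sq_le_sq_mul_sq univ u v
  have := (pow_le_pow_iff_left₀ (abs_nonneg (dotp u v))
    (mul_nonneg (aux_l2_nonneg u) (aux_l2_nonneg v)) (two_ne_zero)).mp (by rwa [sq_abs])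
  exact this
lemma aux_abs_apply_le_l2 {p : ℕ} (u : Vec p) (i : Fin p) : |u i| ≤ l2 u := by
  rw [l2, ← Real.sqrt_sq_eq_abs]
  exact Real.sqrt_le_sqrt (Finset.single_le_sum (fun j _ => sq_nonneg (u j)) (mem_univ i))
lemma aux_l2_smul {p : ℕ} (c : ℝ) (u : Vec p) : l2 (c • u) = |c| * l2 u := by
  unfold l2
  rw [← Real.sqrt_sq_eq_abs, ← Real.sqrt_mul (sq_nonneg c)]
  congr 1
  rw [Finset.mul_sum]
  apply Finset.sum_congr rfl; intro i _
  simp [mul_pow]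
lemma aux_dotp_smul_left {p : ℕ} (c : ℝ) (u v : Vec p) : dotp (c • u) v = c * dotp u v := by
  simp [dotp, Finset.mul_sum, mul_assoc]
lemma aux_dotp_smul_right {p : ℕ} (c : ℝ) (u v : Vec p) : dotp u (c • v) = c * dotp u v := by
  simp [dotp, Finset.mul_sum]; apply Finset.sum_congr rfl; intro i _; ring
lemma aux_dotp_comm {p : ℕ} (u v : Vec p) : dotp u v = dotp v u := by
  simp [dotp, mul_comm]
lemma aux_dotp_sub_left {p : ℕ} (u v w : Vec p) : dotp (u - v) w = dotp u w - dotp v w := by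
  simp [dotp, sub_mul, Finset.sum_sub_distrib]
lemma aux_dotp_sub_right {p : ℕ} (u v w : Vec p) : dotp u (v - w) = dotp u v - dotp u w := by
  simp [dotp, mul_sub, Finset.sum_sub_distrib]
lemma aux_dotp_add_left {p : ℕ} (u v w : Vec p) : dotp (u + v) w = dotp u w + dotp v w := by
  simp [dotp, add_mul, Finset.sum_add_distrib]
lemma aux_sign_mul_self (x : ℝ) : Real.sign x * x = |x| := by
  rcases lt_trichotomy x 0 with h | h | h
  · rw [Real.sign_of_neg h, abs_of_neg h]; ring
  · simp [h]
  · rw [Real.sign_of_pos h, abs_of_pos h]; ring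
lemma aux_abs_sign_le (x : ℝ) : |Real.sign x| ≤ 1 := by
  rcases Real.sign_apply_eq x with h | h | h <;> simp [h]
lemma aux_frob_vecMulVec {p : ℕ} (A : Mat p) (x y : Vec p) :
    frob A (Matrix.vecMulVec x y) = ∑ i, x i * (∑ j, A i j * y j) := by
  simp only [frob, Matrix.vecMulVec_apply, Finset.mul_sum]
  exact Finset.sum_congr rfl fun i _ => Finset.sum_congr rfl fun j _ => by ring
lemma aux_frob_vecMulVec' {p : ℕ} (A : Mat p) (x y : Vec p) :
    frob A (Matrix.vecMulVec x y) = ∑ j, y j * (∑ i, x i * A i j) := by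
  rw [frob, Finset.sum_comm]
  simp only [Matrix.vecMulVec_apply, Finset.mul_sum]
  exact Finset.sum_congr rfl fun j _ => Finset.sum_congr rfl fun i _ => by ring
lemma aux_frob_add_right {p : ℕ} (A B C : Mat p) : frob A (B + C) = frob A B + frob A C := by
  simp [frob, Matrix.add_apply, mul_add, Finset.sum_add_distrib]
lemma aux_vecMulVec_dotp {p : ℕ} (a c u v : Vec p) :
    dotp ((Matrix.vecMulVec a c).mulVec u) v = dotp c u * dotp a v := by
  simp only [dotp, Matrix.mulVec, Matrix.vecMulVec_apply, dotProduct, Finset.sum_mul,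
    Finset.mul_sum]
  exact Finset.sum_congr rfl fun j _ => Finset.sum_congr rfl fun i _ => by ring

/-- Lemma A.2, case 2. Adding any matrix in `T^⊥` of operator norm at most one
to `w_β ⊗ w_β` gives a subgradient of the mixed atomic norm at `β ⊗ β`. -/
theorem subgradient_case_two {p s : ℕ} (hs : 0 < s) (β : Vec p)
    (hβ : IsSparse s β) (hβ0 : β ≠ 0) (Wp : Mat p)
    (hWp_T : ∀ x y : Vec p, frob Wp (Matrix.vecMulVec x β + Matrix.vecMulVec β y) = 0)
    (hWp_op : opNorm Wp ≤ 1) :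
    let w : Vec p := fun i => β i / l2 β + (Real.sqrt (s : ℝ))⁻¹ * Real.sign (β i)
    let W : Mat p := Matrix.vecMulVec w w + Wp
    dotp (W.mulVec β) β = theta (s : ℝ) β β ∧
    ∀ u v : Vec p, dotp (W.mulVec u) v ≤ theta (s : ℝ) u v := by
  intro w W
  obtain ⟨t, ht_def⟩ : ∃ t : ℝ, t = (Real.sqrt (s : ℝ))⁻¹ := ⟨_, rfl⟩
  have ht : 0 ≤ t := ht_def ▸ inv_nonneg.mpr (Real.sqrt_nonneg _)
  have hnβ : 0 < l2 β := aux_l2_pos hβ0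
  obtain ⟨σ, hσ⟩ : ∃ σ : Vec p, σ = fun i => Real.sign (β i) := ⟨_, rfl⟩
  obtain ⟨b, hb⟩ : ∃ b : Vec p, b = (l2 β)⁻¹ • β := ⟨_, rfl⟩
  have hwi : w = b + t • σ := by
    funext i
    show β i / l2 β + (Real.sqrt (s : ℝ))⁻¹ * Real.sign (β i) = (b + t • σ) i
    simp only [hb, hσ, ht_def, Pi.add_apply, Pi.smul_apply, smul_eq_mul]
    rw [div_eq_inv_mul]
  -- rows of Wp annihilate β
  have hfrow : ∀ x : Vec p, ∑ i, x i * (∑ j, Wp i j * β j) = 0 := by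
    intro x
    have h := hWp_T x 0
    rw [aux_frob_add_right, aux_frob_vecMulVec] at h
    have h0 : frob Wp (Matrix.vecMulVec β (0 : Vec p)) = 0 := by
      simp [frob, Matrix.vecMulVec_apply]
    rw [h0, add_zero] at h
    exact h
  have hmv : ∀ x : Vec p, ∀ i, Wp.mulVec x i = ∑ j, Wp i j * x j := by
    intro x i; simp [Matrix.mulVec, dotProduct]
  have hWβ0 : Wp.mulVec β = 0 := by
    have h := hfrow (Wp.mulVec β)
    have h2 : ∑ i, (Wp.mulVec β i) ^ 2 = 0 := by
      rw [← h]
      exact Finset.sum_congr rfl fun i _ => by rw [← hmv β i]; ring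
    funext i
    have := (Finset.sum_eq_zero_iff_of_nonneg fun i _ => sq_nonneg _).mp h2 i (Finset.mem_univ i)
    simpa using (pow_eq_zero_iff two_ne_zero).mp this
  -- columns
  have hfcol : ∀ y : Vec p, ∑ j, y j * (∑ i, β i * Wp i j) = 0 := by
    intro y
    have h := hWp_T 0 y
    rw [aux_frob_add_right] at h
    have h0 : frob Wp (Matrix.vecMulVec (0 : Vec p) β) = 0 := by
      simp [frob, Matrix.vecMulVec_apply]
    rw [h0, zero_add, aux_frob_vecMulVec'] at h
    exact h
  have hcol : ∀ j, ∑ i, β i * Wp i j = 0 := by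
    intro j
    have h := hfcol (fun j => ∑ i, β i * Wp i j)
    have h2 : ∑ j, (∑ i, β i * Wp i j) ^ 2 = 0 := by
      rw [← h]
      exact Finset.sum_congr rfl fun j _ => by ring
    exact (pow_eq_zero_iff two_ne_zero).mp
      ((Finset.sum_eq_zero_iff_of_nonneg fun _ _ => sq_nonneg _).mp h2 j (Finset.mem_univ j))
  -- operator norm consequence
  have hbdd : BddAbove {r : ℝ | ∃ u v : Vec p, l2 u ≤ 1 ∧ l2 v ≤ 1 ∧ r = dotp (Wp.mulVec u) v} := by
    refine ⟨∑ i, ∑ j, |Wp i j|, ?_⟩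
    rintro r ⟨u, v, hu, hv, rfl⟩
    calc dotp (Wp.mulVec u) v = ∑ i, ∑ j, Wp i j * u j * v i := by
          simp only [dotp, Matrix.mulVec, dotProduct, Finset.sum_mul]
      _ ≤ ∑ i, ∑ j, |Wp i j| := by
          refine Finset.sum_le_sum fun i _ => Finset.sum_le_sum fun j _ => ?_
          calc Wp i j * u j * v i ≤ |Wp i j * u j * v i| := le_abs_self _
            _ = |Wp i j| * |u j| * |v i| := by rw [abs_mul, abs_mul]
            _ ≤ |Wp i j| * 1 * 1 := by
                gcongr
                · exact (aux_abs_apply_le_l2 u j).trans hu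
                · exact (aux_abs_apply_le_l2 v i).trans hv
            _ = |Wp i j| := by ring
  have hop : ∀ x y : Vec p, dotp (Wp.mulVec x) y ≤ l2 x * l2 y := by
    intro x y
    rcases eq_or_lt_of_le (aux_l2_nonneg x) with hx | hx
    · obtain rfl : x = 0 := aux_l2_eq_zero hx.symm
      have h : dotp (Wp.mulVec (0 : Vec p)) y = 0 := by
        rw [Matrix.mulVec_zero]; simp [dotp]
      rw [h]
      exact mul_nonneg (aux_l2_nonneg _) (aux_l2_nonneg _)
    rcases eq_or_lt_of_le (aux_l2_nonneg y) with hy | hy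
    · obtain rfl : y = 0 := aux_l2_eq_zero hy.symm
      have h : dotp (Wp.mulVec x) (0 : Vec p) = 0 := by simp [dotp]
      rw [h]
      exact mul_nonneg (aux_l2_nonneg _) (aux_l2_nonneg _)
    · have hmem : dotp (Wp.mulVec ((l2 x)⁻¹ • x)) ((l2 y)⁻¹ • y) ≤ 1 := by
        refine le_trans (le_csSup hbdd ?_) hWp_op
        refine ⟨(l2 x)⁻¹ • x, (l2 y)⁻¹ • y, ?_, ?_, rfl⟩
        · rw [aux_l2_smul, abs_of_nonneg (inv_nonneg.mpr hx.le), inv_mul_cancel₀ hx.ne']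
        · rw [aux_l2_smul, abs_of_nonneg (inv_nonneg.mpr hy.le), inv_mul_cancel₀ hy.ne']
      rw [Matrix.mulVec_smul, aux_dotp_smul_left, aux_dotp_smul_right] at hmem
      have hxy : 0 < l2 x * l2 y := mul_pos hx hy
      have h2 := mul_le_mul_of_nonneg_left hmem hxy.le
      calc dotp (Wp.mulVec x) y
          = l2 x * l2 y * ((l2 x)⁻¹ * ((l2 y)⁻¹ * dotp (Wp.mulVec x) y)) := by
            field_simp
        _ ≤ l2 x * l2 y * 1 := h2
        _ = l2 x * l2 y := mul_one _
  have hbb : dotp b b = 1 := by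
    rw [hb, aux_dotp_smul_left, aux_dotp_smul_right, aux_dotp_self, sq]
    field_simp
  have hl2b : l2 b = 1 := by
    rw [hb, aux_l2_smul, abs_of_nonneg (inv_nonneg.mpr hnβ.le), inv_mul_cancel₀ hnβ.ne']
  have hWpb : Wp.mulVec b = 0 := by rw [hb, Matrix.mulVec_smul, hWβ0, smul_zero]
  have hdotb : ∀ x : Vec p, dotp (Wp.mulVec x) b = 0 := by
    intro x
    rw [hb, aux_dotp_smul_right]
    have hkey : dotp (Wp.mulVec x) β = 0 := by
      have e : dotp (Wp.mulVec x) β = ∑ j, x j * (∑ i, β i * Wp i j) := by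
        calc dotp (Wp.mulVec x) β = ∑ i, ∑ j, Wp i j * x j * β i := by
              simp only [dotp, Matrix.mulVec, dotProduct, Finset.sum_mul]
          _ = ∑ j, ∑ i, Wp i j * x j * β i := Finset.sum_comm
          _ = ∑ j, x j * (∑ i, β i * Wp i j) := by
              refine Finset.sum_congr rfl fun j _ => ?_
              rw [Finset.mul_sum]
              exact Finset.sum_congr rfl fun i _ => by ring
      rw [e]
      simp [hcol]
    rw [hkey, mul_zero]
  constructor
  · -- equality at β
    show dotp ((Matrix.vecMulVec w w + Wp).mulVec β) β = theta (s : ℝ) β β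
    rw [Matrix.add_mulVec, aux_dotp_add_left, aux_vecMulVec_dotp, hWβ0]
    have h0 : dotp (0 : Vec p) β = 0 := by simp [dotp]
    have h1 : dotp b β = l2 β := by
      rw [hb, aux_dotp_smul_left, aux_dotp_self, sq]
      rw [inv_mul_cancel_left₀ hnβ.ne']
    have h2 : dotp σ β = l1 β := by
      rw [hσ]
      show ∑ i, Real.sign (β i) * β i = l1 β
      rw [l1]
      exact Finset.sum_congr rfl fun i _ => aux_sign_mul_self _
    have hwβ : dotp w β = l2 β + t * l1 β := by
      rw [hwi, aux_dotp_add_left, h1, aux_dotp_smul_left, h2]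
    rw [hwβ, h0, add_zero, theta, ← ht_def]
  · intro u v
    obtain ⟨cu, hcu_def⟩ : ∃ c : ℝ, c = dotp b u := ⟨_, rfl⟩
    obtain ⟨cv, hcv_def⟩ : ∃ c : ℝ, c = dotp b v := ⟨_, rfl⟩
    obtain ⟨su, hsu_def⟩ : ∃ c : ℝ, c = dotp σ u := ⟨_, rfl⟩
    obtain ⟨sv, hsv_def⟩ : ∃ c : ℝ, c = dotp σ v := ⟨_, rfl⟩
    obtain ⟨u', hu'_def⟩ : ∃ z : Vec p, z = u - cu • b := ⟨_, rfl⟩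
    obtain ⟨v', hv'_def⟩ : ∃ z : Vec p, z = v - cv • b := ⟨_, rfl⟩
    have hdu : dotp (Wp.mulVec u) v = dotp (Wp.mulVec u') v' := by
      have h1 : Wp.mulVec u' = Wp.mulVec u := by
        rw [hu'_def, Matrix.mulVec_sub, Matrix.mulVec_smul, hWpb, smul_zero, sub_zero]
      calc dotp (Wp.mulVec u) v = dotp (Wp.mulVec u) v - cv * dotp (Wp.mulVec u) b := by
            rw [hdotb]; ring
        _ = dotp (Wp.mulVec u) (v - cv • b) := by rw [aux_dotp_sub_right, aux_dotp_smul_right]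
        _ = dotp (Wp.mulVec u') v' := by rw [h1, hv'_def]
    have hperp : ∀ (z : Vec p) (c : ℝ), c = dotp b z →
        l2 (z - c • b) ^ 2 = l2 z ^ 2 - c ^ 2 := by
      intro z c hc
      rw [← aux_dotp_self, ← aux_dotp_self,
        aux_dotp_sub_left, aux_dotp_sub_right, aux_dotp_sub_right,
        aux_dotp_smul_left, aux_dotp_smul_right, aux_dotp_smul_left, aux_dotp_smul_right,
        aux_dotp_comm z b, hbb, ← hc]
      ring
    have hu'2 : l2 u' ^ 2 = l2 u ^ 2 - cu ^ 2 := by rw [hu'_def]; exact hperp u cu hcu_def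
    have hv'2 : l2 v' ^ 2 = l2 v ^ 2 - cv ^ 2 := by rw [hv'_def]; exact hperp v cv hcv_def
    have hcu : |cu| ≤ l2 u := by
      have h := aux_abs_dotp_le b u; rw [hl2b, one_mul] at h; rw [hcu_def]; exact h
    have hcv : |cv| ≤ l2 v := by
      have h := aux_abs_dotp_le b v; rw [hl2b, one_mul] at h; rw [hcv_def]; exact h
    have hsub : ∀ z : Vec p, |dotp σ z| ≤ l1 z := by
      intro z
      rw [hσ]
      refine le_trans (Finset.abs_sum_le_sum_abs _ _) ?_
      rw [l1]
      refine Finset.sum_le_sum fun i _ => ?_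
      rw [abs_mul]
      calc |Real.sign (β i)| * |z i| ≤ 1 * |z i| :=
            mul_le_mul_of_nonneg_right (aux_abs_sign_le _) (abs_nonneg _)
        _ = |z i| := one_mul _
    have hsu : |su| ≤ l1 u := by rw [hsu_def]; exact hsub u
    have hsv : |sv| ≤ l1 v := by rw [hsv_def]; exact hsub v
    have hAu2 : (cu + t * su) ^ 2 + l2 u' ^ 2 ≤ (l2 u + t * l1 u) ^ 2 := by
      rw [hu'2]
      obtain ⟨h1, h2⟩ := abs_le.mp hcu
      obtain ⟨h3, h4⟩ := abs_le.mp hsu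
      have h5 : 0 ≤ t * ((l2 u - cu) * (l1 u + su)) :=
        mul_nonneg ht (mul_nonneg (by linarith) (by linarith))
      have h6 : 0 ≤ t * ((l2 u + cu) * (l1 u - su)) :=
        mul_nonneg ht (mul_nonneg (by linarith) (by linarith))
      have h7 : 0 ≤ t * t * ((l1 u - su) * (l1 u + su)) :=
        mul_nonneg (mul_nonneg ht ht) (mul_nonneg (by linarith) (by linarith))
      have e : (l2 u + t * l1 u) ^ 2 - ((cu + t * su) ^ 2 + (l2 u ^ 2 - cu ^ 2))
          = t * ((l2 u - cu) * (l1 u + su)) + t * ((l2 u + cu) * (l1 u - su))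
            + t * t * ((l1 u - su) * (l1 u + su)) := by ring
      linarith [e, h5, h6, h7]
    have hAv2 : (cv + t * sv) ^ 2 + l2 v' ^ 2 ≤ (l2 v + t * l1 v) ^ 2 := by
      rw [hv'2]
      obtain ⟨h1, h2⟩ := abs_le.mp hcv
      obtain ⟨h3, h4⟩ := abs_le.mp hsv
      have h5 : 0 ≤ t * ((l2 v - cv) * (l1 v + sv)) :=
        mul_nonneg ht (mul_nonneg (by linarith) (by linarith))
      have h6 : 0 ≤ t * ((l2 v + cv) * (l1 v - sv)) :=
        mul_nonneg ht (mul_nonneg (by linarith) (by linarith))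
      have h7 : 0 ≤ t * t * ((l1 v - sv) * (l1 v + sv)) :=
        mul_nonneg (mul_nonneg ht ht) (mul_nonneg (by linarith) (by linarith))
      have e : (l2 v + t * l1 v) ^ 2 - ((cv + t * sv) ^ 2 + (l2 v ^ 2 - cv ^ 2))
          = t * ((l2 v - cv) * (l1 v + sv)) + t * ((l2 v + cv) * (l1 v - sv))
            + t * t * ((l1 v - sv) * (l1 v + sv)) := by ring
      linarith [e, h5, h6, h7]
    have hCu : 0 ≤ l2 u + t * l1 u := add_nonneg (aux_l2_nonneg u) (mul_nonneg ht (aux_l1_nonneg u))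
    have hCv : 0 ≤ l2 v + t * l1 v := add_nonneg (aux_l2_nonneg v) (mul_nonneg ht (aux_l1_nonneg v))
    have hprod : |cu + t * su| * |cv + t * sv| + l2 u' * l2 v'
        ≤ (l2 u + t * l1 u) * (l2 v + t * l1 v) := by
      have hL : 0 ≤ |cu + t * su| * |cv + t * sv| + l2 u' * l2 v' :=
        add_nonneg (mul_nonneg (abs_nonneg _) (abs_nonneg _))
          (mul_nonneg (aux_l2_nonneg u') (aux_l2_nonneg v'))
      have hR : 0 ≤ (l2 u + t * l1 u) * (l2 v + t * l1 v) := mul_nonneg hCu hCv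
      have h12 : ((cu + t * su) ^ 2 + l2 u' ^ 2) * ((cv + t * sv) ^ 2 + l2 v' ^ 2)
          ≤ (l2 u + t * l1 u) ^ 2 * (l2 v + t * l1 v) ^ 2 :=
        mul_le_mul hAu2 hAv2 (by positivity) (by positivity)
      have hsq : (|cu + t * su| * |cv + t * sv| + l2 u' * l2 v') ^ 2
          ≤ ((l2 u + t * l1 u) * (l2 v + t * l1 v)) ^ 2 := by
        have h12' : (|cu + t * su| ^ 2 + l2 u' ^ 2) * (|cv + t * sv| ^ 2 + l2 v' ^ 2)
            ≤ ((l2 u + t * l1 u) * (l2 v + t * l1 v)) ^ 2 := by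
          rw [sq_abs, sq_abs, mul_pow]; exact h12
        have e : (|cu + t * su| ^ 2 + l2 u' ^ 2) * (|cv + t * sv| ^ 2 + l2 v' ^ 2)
            - (|cu + t * su| * |cv + t * sv| + l2 u' * l2 v') ^ 2
            = (|cu + t * su| * l2 v' - |cv + t * sv| * l2 u') ^ 2 := by ring
        linarith [e, h12', sq_nonneg (|cu + t * su| * l2 v' - |cv + t * sv| * l2 u')]
      exact (pow_le_pow_iff_left₀ hL hR two_ne_zero).mp hsq
    have hsplit : dotp (W.mulVec u) v = dotp w u * dotp w v + dotp (Wp.mulVec u) v := by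
      show dotp ((Matrix.vecMulVec w w + Wp).mulVec u) v = _
      rw [Matrix.add_mulVec, aux_dotp_add_left, aux_vecMulVec_dotp]
    have hwu : dotp w u = cu + t * su := by
      rw [hwi, aux_dotp_add_left, ← hcu_def, aux_dotp_smul_left, ← hsu_def]
    have hwv : dotp w v = cv + t * sv := by
      rw [hwi, aux_dotp_add_left, ← hcv_def, aux_dotp_smul_left, ← hsv_def]
    have hfinal : dotp (W.mulVec u) v ≤ (l2 u + t * l1 u) * (l2 v + t * l1 v) := by
      rw [hsplit, hwu, hwv, hdu]
      calc (cu + t * su) * (cv + t * sv) + dotp (Wp.mulVec u') v'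
          ≤ |cu + t * su| * |cv + t * sv| + l2 u' * l2 v' := by
            refine add_le_add ?_ (hop u' v')
            rw [← abs_mul]; exact le_abs_self _
        _ ≤ (l2 u + t * l1 u) * (l2 v + t * l1 v) := hprod
    rw [theta, ← ht_def]
    exact hfinal
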